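/- Let p, q be coprime positive integers with p < q, let ℓ be a positive integer, and assume τ_ℓ ≤ 3p+3q, where τ_ℓ = 2^{2ℓ-1}. Then rank(A,b) = rank(A) if and only if p ∈ Γ_ℓ or q ∈ Γ_ℓ, where Γ_ℓ = {(2k-1)·τ_ℓ : k a positive integer} and (A,b) denotes the matrix A augmented by the column b. -/

import Mathlib

/-- The `(3p+3q+1) × (3p+3q-τ+1)` matrix whose `n`-th column is the coefficient
vector of `x^(n-1)·(1 + x^τ)` (indices here start at 0). -/
def cornerA (p q τ : ℕ) : Matrix (Fin (3*p+3*q+1)) (Fin (3*p+3*q-τ+1)) ℚ :=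
  Matrix.of fun m n => if (m : ℕ) = (n : ℕ) ∨ (m : ℕ) = (n : ℕ) + τ then 1 else 0

/-- The coefficient vector of `1 + x^(3p) + x^(3q) + x^(3p+3q)`. -/
def cornerb (p q : ℕ) : Fin (3*p+3*q+1) → ℚ :=
  fun m => if (m : ℕ) = 0 ∨ (m : ℕ) = 3*p ∨ (m : ℕ) = 3*q ∨ (m : ℕ) = 3*p+3*q
    then 1 else 0

/-- The augmented matrix `(A, b)`. -/
def cornerAb (p q τ : ℕ) : Matrix (Fin (3*p+3*q+1)) (Fin (3*p+3*q-τ+1+1)) ℚ :=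
  Matrix.of fun m n =>
    if h : (n : ℕ) < 3*p+3*q-τ+1 then cornerA p q τ m ⟨n, h⟩ else cornerb p q m

/-- `Γ_ℓ = {(2k-1)·τ_ℓ : k ∈ ℕ_{>0}}` where `τ_ℓ = 2^{2ℓ-1}`. -/
def GammaL (l : ℕ) : Set ℕ := {m | ∃ k : ℕ, 0 < k ∧ m = (2*k-1) * 2^(2*l-1)}

open Polynomial Matrix

section Aux

lemma gamma_char (l m : ℕ) (hl : 0 < l) :
    m ∈ ({mm | ∃ k : ℕ, 0 < k ∧ mm = (2*k-1) * 2^(2*l-1)} : Set ℕ) ↔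
      2^(2*l-1) ∣ m ∧ ¬ 2^(2*l) ∣ m := by
  have h2 : 2^(2*l) = 2^(2*l-1) * 2 := by
    rw [← pow_succ]; congr 1; omega
  have hpos : 0 < 2^(2*l-1) := Nat.pow_pos (by norm_num)
  constructor
  · rintro ⟨k, hk, rfl⟩
    constructor
    · exact ⟨2*k-1, mul_comm _ _⟩
    · rintro ⟨c, hc⟩
      rw [h2] at hc
      have : (2*k-1) * 2^(2*l-1) = (2*c) * 2^(2*l-1) := by rw [hc]; ring
      have := Nat.eq_of_mul_eq_mul_right hpos this
      omega
  · rintro ⟨⟨u, rfl⟩, hnd⟩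
    have hu : ¬ 2 ∣ u := by
      rintro ⟨c, rfl⟩
      exact hnd ⟨c, by rw [h2]; ring⟩
    refine ⟨(u+1)/2, by omega, by rw [mul_comm]; congr 1; omega⟩

lemma zeta_pow_neg_one {l : ℕ} (hl : 0 < l) {ζ : ℂ}
    (h : IsPrimitiveRoot ζ (2^(2*l))) (m : ℕ) :
    ζ ^ m = -1 ↔ 2^(2*l-1) ∣ m ∧ ¬ 2^(2*l) ∣ m := by
  have h2 : 2^(2*l) = 2^(2*l-1) * 2 := by rw [← pow_succ]; congr 1; omega
  have hpos : 0 < 2^(2*l-1) := Nat.pow_pos (by norm_num)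
  have hτ : ζ ^ (2^(2*l-1)) = -1 := by
    have hsq : ζ ^ (2^(2*l-1)) * ζ ^ (2^(2*l-1)) = 1 := by
      rw [← pow_add, ← two_mul, mul_comm 2 _, ← h2]; exact h.pow_eq_one
    rcases mul_self_eq_one_iff.mp hsq with h1 | h1
    · exfalso
      have := (h.pow_eq_one_iff_dvd _).mp h1
      rw [h2] at this
      have := Nat.le_of_dvd hpos this
      nlinarith [hpos]
    · exact h1
  constructor
  · intro hm
    have h1 : ζ ^ (m + 2^(2*l-1)) = 1 := by
      rw [pow_add, hm, hτ]; ring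
    obtain ⟨c, hc⟩ := (h.pow_eq_one_iff_dvd _).mp h1
    rw [h2] at hc
    have hc1 : 1 ≤ c := by nlinarith [hpos]
    constructor
    · obtain ⟨d, hd⟩ : ∃ d, 2*c = d + 1 := ⟨2*c-1, by omega⟩
      have hd2 : d = 2*c - 1 := by omega
      refine ⟨d, ?_⟩
      have h3 : m + 2^(2*l-1) = 2^(2*l-1)*d + 2^(2*l-1) := by
        rw [hc, show 2^(2*l-1)*2*c = 2^(2*l-1)*(2*c) from by ring, hd]; ring
      exact Nat.add_right_cancel h3
    · rintro ⟨d, hd⟩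
      rw [h2] at hd
      have : 2^(2*l-1) * (2*c) = 2^(2*l-1)*(2*d) + 2^(2*l-1) := by nlinarith
      have : 2*c = 2*d+1 := Nat.eq_of_mul_eq_mul_left hpos (by linarith)
      omega
  · rintro ⟨⟨u, rfl⟩, hnd⟩
    have hu : ¬ 2 ∣ u := by
      rintro ⟨c, rfl⟩
      exact hnd ⟨c, by rw [h2]; ring⟩
    obtain ⟨j, hj⟩ : ∃ j, u = 2*j+1 := ⟨u/2, by omega⟩
    subst hj
    rw [pow_mul, hτ]
    rw [show 2*j+1 = 2*j+1 from rfl, pow_add, pow_mul]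
    norm_num

lemma cyclo_eq (l : ℕ) (hl : 0 < l) :
    (X ^ (2^(2*l-1)) + 1 : ℚ[X]) = cyclotomic (2^(2*l)) ℚ := by
  rw [show 2*l = (2*l-1)+1 by omega, cyclotomic_prime_pow_eq_geom_sum Nat.prime_two]
  simp [Finset.sum_range_succ, add_comm]

lemma dvd_iff_aeval {l : ℕ} (hl : 0 < l) {ζ : ℂ}
    (h : IsPrimitiveRoot ζ (2^(2*l))) (F : ℚ[X]) :
    (X ^ (2^(2*l-1)) + 1 : ℚ[X]) ∣ F ↔ (aeval ζ) F = 0 := by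
  have hmin : (X ^ (2^(2*l-1)) + 1 : ℚ[X]) = minpoly ℚ ζ := by
    rw [cyclo_eq l hl]
    exact cyclotomic_eq_minpoly_rat h (Nat.pow_pos (by norm_num))
  constructor
  · rintro ⟨g, rfl⟩
    have hτ : ζ ^ (2^(2*l-1)) = -1 := by
      rw [zeta_pow_neg_one hl h]
      refine ⟨dvd_refl _, ?_⟩
      rintro ⟨c, hc⟩
      have h2 : 2^(2*l) = 2^(2*l-1) * 2 := by rw [← pow_succ]; congr 1; omega
      have hpos : 0 < 2^(2*l-1) := Nat.pow_pos (by norm_num)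
      rw [h2] at hc
      rcases Nat.eq_zero_or_pos c with rfl | hcp
      · simp at hc
      · nlinarith
    simp [_root_.map_mul, hτ]
  · intro hz
    rw [hmin]
    exact minpoly.dvd ℚ ζ hz
noncomputable def Lmap (N : ℕ) : (Fin (N+1) → ℚ) →ₗ[ℚ] ℚ[X] :=
  ∑ i : Fin (N+1), (LinearMap.toSpanSingleton ℚ ℚ[X] (X^(i:ℕ))).comp (LinearMap.proj i)

lemma Lmap_apply (N : ℕ) (v : Fin (N+1) → ℚ) :
    Lmap N v = ∑ i : Fin (N+1), v i • X^(i:ℕ) := by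
  simp [Lmap, LinearMap.sum_apply, LinearMap.toSpanSingleton_apply]

lemma Lmap_coeff (N : ℕ) (v : Fin (N+1) → ℚ) (j : Fin (N+1)) :
    (Lmap N v).coeff (j:ℕ) = v j := by
  rw [Lmap_apply]
  rw [finset_sum_coeff]
  simp only [coeff_smul, coeff_X_pow, smul_eq_mul, mul_ite, mul_one, mul_zero]
  simp only [Fin.val_eq_val]
  rw [Finset.sum_ite_eq]
  simp

lemma Lmap_injective (N : ℕ) : Function.Injective (Lmap N) := by
  intro v w h
  funext j
  rw [← Lmap_coeff N v j, ← Lmap_coeff N w j, h]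

def esingle (N c : ℕ) : Fin (N+1) → ℚ := fun m => if (m:ℕ) = c then 1 else 0

lemma Lmap_single (N c : ℕ) (hc : c ≤ N) :
    Lmap N (esingle N c) = X^c := by
  rw [Lmap_apply]
  simp only [esingle]
  rw [Fin.sum_univ_eq_sum_range (fun j => (if j = c then (1:ℚ) else 0) • X^j)]
  simp only [ite_smul, one_smul, zero_smul]
  rw [Finset.sum_ite_eq' (Finset.range (N+1)) c (fun j => (X:ℚ[X])^j)]
  simp [Nat.lt_succ_iff, hc]

lemma Lmap_natDegree_le (N : ℕ) (v : Fin (N+1) → ℚ) : (Lmap N v).natDegree ≤ N := by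
  rw [Lmap_apply]
  apply Polynomial.natDegree_sum_le_of_forall_le
  intro i _
  apply le_trans (natDegree_smul_le _ _)
  simp [Nat.lt_succ_iff.mp i.isLt]

lemma col_decomp (p q τ : ℕ) (hτ0 : 0 < τ) (n : Fin (3*p+3*q-τ+1)) :
    (cornerA p q τ)ᵀ n = esingle (3*p+3*q) (n:ℕ) + esingle (3*p+3*q) ((n:ℕ)+τ) := by
  funext m
  simp only [cornerA, Matrix.transpose_apply, Matrix.of_apply, esingle, Pi.add_apply]
  split_ifs <;> first | omega | norm_num

lemma b_decomp (p q : ℕ) (hp : 0 < p) (hpq : p < q) :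
    cornerb p q = esingle (3*p+3*q) 0 + esingle (3*p+3*q) (3*p)
      + esingle (3*p+3*q) (3*q) + esingle (3*p+3*q) (3*p+3*q) := by
  funext m
  simp only [cornerb, esingle, Pi.add_apply]
  split_ifs <;> first | omega | norm_num

lemma Lmap_b (p q : ℕ) (hp : 0 < p) (hpq : p < q) :
    Lmap (3*p+3*q) (cornerb p q) = 1 + X^(3*p) + X^(3*q) + X^(3*p+3*q) := by
  rw [b_decomp p q hp hpq]
  simp only [map_add]
  rw [Lmap_single _ 0 (by omega), Lmap_single _ (3*p) (by omega),
    Lmap_single _ (3*q) (by omega), Lmap_single _ (3*p+3*q) (by omega)]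
  simp

lemma Lmap_col (p q τ : ℕ) (hτ0 : 0 < τ) (hτ : τ ≤ 3*p+3*q) (n : Fin (3*p+3*q-τ+1)) :
    Lmap (3*p+3*q) ((cornerA p q τ)ᵀ n) = X^(n:ℕ) * (X^τ + 1) := by
  have hn : (n:ℕ) ≤ 3*p+3*q-τ := Nat.lt_succ_iff.mp n.isLt
  rw [col_decomp p q τ hτ0 n, map_add, Lmap_single _ _ (by omega),
    Lmap_single _ _ (by omega)]
  ring

lemma span_char (p q τ : ℕ) (hτ0 : 0 < τ) (hτ : τ ≤ 3*p+3*q) (hp : 0 < p) (hpq : p < q) :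
    cornerb p q ∈ Submodule.span ℚ (Set.range (cornerA p q τ)ᵀ) ↔
      (X^τ + 1 : ℚ[X]) ∣ (1 + X^(3*p) + X^(3*q) + X^(3*p+3*q)) := by
  constructor
  · intro hb
    have hW : Submodule.span ℚ (Set.range (cornerA p q τ)ᵀ) ≤
        Submodule.comap (Lmap (3*p+3*q))
          ((Ideal.span {(X^τ + 1 : ℚ[X])}).restrictScalars ℚ) := by
      rw [Submodule.span_le]
      rintro _ ⟨n, rfl⟩
      simp only [SetLike.mem_coe, Submodule.mem_comap, Submodule.restrictScalars_mem,
        Ideal.mem_span_singleton]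
      rw [Lmap_col p q τ hτ0 hτ n]
      exact ⟨X^(n:ℕ), mul_comm _ _⟩
    have := hW hb
    simp only [Submodule.mem_comap, Submodule.restrictScalars_mem,
      Ideal.mem_span_singleton] at this
    rwa [Lmap_b p q hp hpq] at this
  · rintro ⟨f, hf⟩
    -- degree bound on f
    have hPb : Lmap (3*p+3*q) (cornerb p q) = (X^τ+1) * f := by
      rw [Lmap_b p q hp hpq, hf]
    have hfne : f ≠ 0 := by
      rintro rfl
      rw [mul_zero] at hPb
      have h0 := Lmap_coeff (3*p+3*q) (cornerb p q) ⟨0, by omega⟩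
      rw [hPb] at h0
      simp [cornerb] at h0
    have hgne : (X^τ+1 : ℚ[X]) ≠ 0 := by
      have := Polynomial.X_pow_add_C_ne_zero (R := ℚ) (by omega : 0 < τ) 1
      simpa using this
    have hdeg : f.natDegree ≤ 3*p+3*q-τ := by
      have h1 : ((X^τ+1 : ℚ[X]) * f).natDegree = τ + f.natDegree := by
        rw [natDegree_mul hgne hfne]
        congr 1
        have := Polynomial.natDegree_X_pow_add_C (R := ℚ) (n := τ) (r := 1)
        simpa using this
      have h2 : ((X^τ+1 : ℚ[X]) * f).natDegree ≤ 3*p+3*q := by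
        rw [← hPb]; exact Lmap_natDegree_le _ _
      omega
    -- reconstruct b as combination of columns
    set M := 3*p+3*q-τ with hM
    have hfsum : f = ∑ n ∈ Finset.range (M+1), C (f.coeff n) * X^n := by
      conv_lhs => rw [f.as_sum_range' (M+1) (by omega)]
      exact Finset.sum_congr rfl fun i _ => (Polynomial.C_mul_X_pow_eq_monomial).symm
    have key : cornerb p q = ∑ n : Fin (M+1), f.coeff (n:ℕ) • (cornerA p q τ)ᵀ n := by
      apply Lmap_injective (3*p+3*q)
      rw [map_sum, hPb]
      have : ∀ n : Fin (M+1), Lmap (3*p+3*q) (f.coeff (n:ℕ) • (cornerA p q τ)ᵀ n)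
          = C (f.coeff (n:ℕ)) * X^(n:ℕ) * (X^τ+1) := by
        intro n
        rw [LinearMap.map_smul, Lmap_col p q τ hτ0 hτ n, smul_eq_C_mul, mul_assoc]
      rw [Finset.sum_congr rfl (fun n _ => this n), ← Finset.sum_mul,
        Fin.sum_univ_eq_sum_range (fun n => C (f.coeff n) * X^n) (M+1), ← hfsum]
      ring
    rw [key]
    exact Submodule.sum_mem _ fun n _ => Submodule.smul_mem _ _
      (Submodule.subset_span ⟨n, rfl⟩)

lemma range_Ab (p q τ : ℕ) :
    Set.range (cornerAb p q τ)ᵀ =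
      insert (cornerb p q) (Set.range (cornerA p q τ)ᵀ) := by
  ext v
  constructor
  · rintro ⟨n, rfl⟩
    by_cases h : (n:ℕ) < 3*p+3*q-τ+1
    · right
      refine ⟨⟨n, h⟩, ?_⟩
      funext m
      simp [cornerAb, Matrix.transpose_apply, h]
      intro h'; omega
    · left
      funext m
      simp [cornerAb, Matrix.transpose_apply, h]
      intro h'; omega
  · rintro (rfl | ⟨n, rfl⟩)
    · refine ⟨⟨3*p+3*q-τ+1, by omega⟩, ?_⟩
      funext m
      simp [cornerAb, Matrix.transpose_apply]
    · refine ⟨⟨n, by omega⟩, ?_⟩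
      funext m
      simp [cornerAb, Matrix.transpose_apply, n.isLt]
      intro h'; have := n.isLt; omega

lemma rank_iff (p q τ : ℕ) :
    (cornerAb p q τ).rank = (cornerA p q τ).rank ↔
      cornerb p q ∈ Submodule.span ℚ (Set.range (cornerA p q τ)ᵀ) := by
  rw [Matrix.rank_eq_finrank_span_cols, Matrix.rank_eq_finrank_span_cols]
  erw [range_Ab]
  constructor
  · intro h
    have hle : Submodule.span ℚ (Set.range (cornerA p q τ)ᵀ) ≤
        Submodule.span ℚ (insert (cornerb p q) (Set.range (cornerA p q τ)ᵀ)) :=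
      Submodule.span_mono (Set.subset_insert _ _)
    have heq := Submodule.eq_of_le_of_finrank_le hle h.le
    rw [heq]
    exact Submodule.subset_span (Set.mem_insert _ _)
  · intro hb
    rw [Submodule.span_insert_eq_span hb]
    rfl

lemma two_pow_dvd_three_mul (k m : ℕ) : 2^k ∣ 3*m ↔ 2^k ∣ m := by
  have hcop : Nat.Coprime (2^k) 3 := Nat.Coprime.pow_left _ (by norm_num)
  exact ⟨fun h => hcop.dvd_of_dvd_mul_left h, fun h => h.mul_left 3⟩

end Aux

theorem rank_eq_iff_mem_GammaL (p q l : ℕ) (hp : 0 < p) (hpq : p < q)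
    (hco : Nat.Coprime p q) (hl : 0 < l) (hτ : 2^(2*l-1) ≤ 3*p+3*q) :
    (cornerAb p q (2^(2*l-1))).rank = (cornerA p q (2^(2*l-1))).rank ↔
      p ∈ GammaL l ∨ q ∈ GammaL l := by
  have hτ0 : 0 < 2^(2*l-1) := Nat.pow_pos (by norm_num)
  obtain ⟨ζ, hζ⟩ : ∃ ζ : ℂ, IsPrimitiveRoot ζ (2^(2*l)) :=
    ⟨_, Complex.isPrimitiveRoot_exp _ (by positivity)⟩
  rw [rank_iff, span_char p q _ hτ0 hτ hp hpq, dvd_iff_aeval hl hζ]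
  have heval : (aeval ζ) (1 + X^(3*p) + X^(3*q) + X^(3*p+3*q) : ℚ[X])
      = (1 + ζ^(3*p)) * (1 + ζ^(3*q)) := by
    simp [pow_add]
    ring
  rw [heval, mul_eq_zero]
  have hfac : ∀ m : ℕ, (1 + ζ^m = 0) ↔ ζ^m = -1 := fun m => by
    constructor <;> intro h <;> linear_combination h
  rw [hfac, hfac, zeta_pow_neg_one hl hζ, zeta_pow_neg_one hl hζ]
  rw [two_pow_dvd_three_mul, two_pow_dvd_three_mul, two_pow_dvd_three_mul,
    two_pow_dvd_three_mul]
  rw [show (GammaL l = {mm | ∃ k : ℕ, 0 < k ∧ mm = (2*k-1) * 2^(2*l-1)}) from rfl]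
  rw [← gamma_char l p hl, ← gamma_char l q hl]
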